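/- With the two-parameter construction of rotated eigenvectors in coordinates μ, ν and r² = 2/(n g(λ_μ, λ_ν)), the symmetrized KL divergence satisfies K(P₁,P₂) + K(P₂,P₁) = n g(λ_μ, λ_ν) r² for the corresponding Gaussian spiked models, where g(λ,τ) = (λ-τ)²/((1+λ)(1+τ)). -/

import Mathlib

/-- The KL divergence formula for the multispiked Gaussian model:
`K(θ⁽¹⁾,θ⁽²⁾) = n[(1/2)Σ_ν η(λ_ν)λ_ν − (1/2)Σ_{ν,ν'} η(λ_ν)λ_{ν'} |⟨θ_{ν'}⁽¹⁾,θ_ν⁽²⁾⟩|²]`. -/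
noncomputable def spikeKL {N M : ℕ} (n : ℕ) (l : Fin M → ℝ)
    (a b : Fin M → EuclideanSpace ℝ (Fin N)) : ℝ :=
  n * ((1 / 2) * ∑ ν, (l ν / (1 + l ν)) * l ν
    - (1 / 2) * ∑ ν, ∑ ν', (l ν / (1 + l ν)) * l ν' * (inner ℝ (a ν') (b ν) : ℝ) ^ 2)

theorem symmetrized_kl_two_point (n N M : ℕ) (hn : 0 < n) (hMN : M ≤ N)
    (l : Fin M → ℝ) (hl : ∀ i, 0 < l i) (μ ν : Fin M) (hμν : μ ≠ ν)
    (r : ℝ) (hr0 : 0 < r) (hr1 : r < 1)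
    (hr2 : r ^ 2 = 2 / (n * ((l μ - l ν) ^ 2 / ((1 + l μ) * (1 + l ν))))) :
    let e : Fin M → EuclideanSpace ℝ (Fin N) :=
      fun i => EuclideanSpace.single (Fin.castLE hMN i) (1 : ℝ)
    let θ₁ : Fin M → EuclideanSpace ℝ (Fin N) := e
    let θ₂ : Fin M → EuclideanSpace ℝ (Fin N) := fun i =>
      if i = ν then Real.sqrt (1 - r ^ 2) • e ν + r • e μ
      else if i = μ then (-r) • e ν + Real.sqrt (1 - r ^ 2) • e μ
      else e i
    spikeKL n l θ₁ θ₂ + spikeKL n l θ₂ θ₁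
      = n * ((l μ - l ν) ^ 2 / ((1 + l μ) * (1 + l ν))) * r ^ 2 := by
  intro e θ₁ θ₂
  have hinj : Function.Injective (Fin.castLE hMN) := Fin.castLE_injective hMN
  have he : ∀ i j : Fin M, (inner ℝ (e i) (e j) : ℝ) = if j = i then 1 else 0 := by
    intro i j
    simp [e, EuclideanSpace.inner_single_left, EuclideanSpace.single_apply, hinj.eq_iff, eq_comm]
  have hs2 : Real.sqrt (1 - r ^ 2) ^ 2 = 1 - r ^ 2 := by
    rw [Real.sq_sqrt]
    nlinarith
  have hab : ∀ i j : Fin M, (inner ℝ (θ₁ j) (θ₂ i) : ℝ) ^ 2 =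
      (if j = i then (1:ℝ) else 0) + (if j = ν ∧ i = ν then -(r ^ 2) else 0)
      + (if j = μ ∧ i = ν then r ^ 2 else 0) + (if j = ν ∧ i = μ then r ^ 2 else 0)
      + (if j = μ ∧ i = μ then -(r ^ 2) else 0) := by
    intro i j
    have hθ1 : θ₁ j = e j := rfl
    rw [hθ1]
    rcases eq_or_ne i ν with hiν | hiν
    · simp only [θ₂, if_pos hiν, inner_add_right, real_inner_smul_right, he]
      rcases eq_or_ne j ν with hjν | hjν
      · simp [hiν, hjν, hμν, Ne.symm hμν, hs2]
        ring
      · rcases eq_or_ne j μ with hjμ | hjμ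
        · simp [hiν, hjμ, hμν, Ne.symm hμν, hjν, Ne.symm hjν]
        · simp [hiν, hjν, Ne.symm hjν, hjμ, Ne.symm hjμ]
    · rcases eq_or_ne i μ with hiμ | hiμ
      · simp only [θ₂, if_neg hiν, if_pos hiμ, inner_add_right, real_inner_smul_right, he]
        rcases eq_or_ne j ν with hjν | hjν
        · simp [hiμ, hjν, hμν, Ne.symm hμν]
        · rcases eq_or_ne j μ with hjμ | hjμ
          · simp [hiμ, hjμ, hμν, Ne.symm hμν, hjν, Ne.symm hjν, hs2]
            ring
          · simp [hiμ, hjν, Ne.symm hjν, hjμ, Ne.symm hjμ]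
      · simp only [θ₂, if_neg hiν, if_neg hiμ, he]
        have h4 : ¬(j = ν ∧ i = ν) := fun h => hiν h.2
        have h5 : ¬(j = μ ∧ i = ν) := fun h => hiν h.2
        have h6 : ¬(j = ν ∧ i = μ) := fun h => hiμ h.2
        have h7 : ¬(j = μ ∧ i = μ) := fun h => hiμ h.2
        rw [if_neg h4, if_neg h5, if_neg h6, if_neg h7]
        rcases eq_or_ne i j with h | h
        · simp [h]
        · simp [h, Ne.symm h]
  have hba : ∀ i j : Fin M, (inner ℝ (θ₂ j) (θ₁ i) : ℝ) ^ 2 =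
      (if j = i then (1:ℝ) else 0) + (if j = ν ∧ i = ν then -(r ^ 2) else 0)
      + (if j = μ ∧ i = ν then r ^ 2 else 0) + (if j = ν ∧ i = μ then r ^ 2 else 0)
      + (if j = μ ∧ i = μ then -(r ^ 2) else 0) := by
    intro i j
    rw [real_inner_comm, hab j i]
    rw [if_congr (eq_comm) rfl rfl,
      if_congr (and_comm (a := i = ν) (b := j = ν)) rfl rfl,
      if_congr (and_comm (a := i = μ) (b := j = ν)) rfl rfl,
      if_congr (and_comm (a := i = ν) (b := j = μ)) rfl rfl,
      if_congr (and_comm (a := i = μ) (b := j = μ)) rfl rfl]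
    ring
  have hμ1 : (1 : ℝ) + l μ ≠ 0 := by have := hl μ; linarith
  have hν1 : (1 : ℝ) + l ν ≠ 0 := by have := hl ν; linarith
  simp only [spikeKL, hab, hba]
  simp only [mul_add, mul_ite, mul_one, mul_zero, ite_and, Finset.sum_add_distrib,
    Finset.sum_ite_eq', Finset.mem_univ, if_true, mul_neg, neg_zero,
    apply_ite (fun x : ℝ => -x)]
  have hg : (1 : ℝ) + l μ + (1 + l μ) * l ν = (1 + l μ) * (1 + l ν) := by ring
  rw [hg]
  have key : (l μ - l ν) ^ 2 / ((1 + l μ) * (1 + l ν)) =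
      l ν / (1 + l ν) * l ν + l μ / (1 + l μ) * l μ
        - l ν / (1 + l ν) * l μ - l μ / (1 + l μ) * l ν := by
    field_simp
    ring
  rw [key]
  ring
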